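/- Let T be a positive linear map on n × n complex matrices and C ≥ 1 a real such that for every unit vector ψ ∈ ℂⁿ the matrix T(ψψ*) is positive definite with λ_max(T(ψψ*)) ≤ C·λ_min(T(ψψ*)). Then Δ(T) ≤ 2·log C. -/

import Mathlib

open Matrix Filter
open scoped ComplexOrder

noncomputable section

/-- The trace norm `‖A‖₁ = Tr √(AᴴA)` of a complex square matrix. -/
def traceNorm {m : Type*} [Fintype m] [DecidableEq m] (A : Matrix m m ℂ) : ℝ :=
  ((Matrix.posSemidef_conjTranspose_mul_self A).1.eigenvectorUnitary.1 *
    diagonal (((↑) : ℝ → ℂ) ∘ Real.sqrt ∘ (Matrix.posSemidef_conjTranspose_mul_self A).1.eigenvalues) *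
    (star (Matrix.posSemidef_conjTranspose_mul_self A).1.eigenvectorUnitary : Matrix m m ℂ)).trace.re

/-- Spectral radius of a map on a complex vector space:
the supremum of the moduli of its eigenvalues. -/
def specRad {M : Type*} [Zero M] [SMul ℂ M] (T : M → M) : ℝ :=
  sSup {r : ℝ | ∃ (c : ℂ) (v : M), v ≠ 0 ∧ T v = c • v ∧ r = ‖c‖}

/-- A linear map on square matrices is positive if it maps positive semidefinite
matrices to positive semidefinite matrices. -/
def IsPosMap {m : Type*} [Fintype m] (T : Matrix m m ℂ →ₗ[ℂ] Matrix m m ℂ) : Prop :=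
  ∀ A : Matrix m m ℂ, A.PosSemidef → (T A).PosSemidef

/-- `sup(x/y) = inf {λ ≥ 0 : x ≤ λ y}` (in `[0,∞]`, with the Loewner order). -/
def supRatio {m : Type*} [Fintype m] (x y : Matrix m m ℂ) : ENNReal :=
  sInf {r : ENNReal | ∃ c : ℝ, 0 ≤ c ∧ r = ENNReal.ofReal c ∧ (c • y - x).PosSemidef}

/-- `inf(x/y) = sup {λ ≥ 0 : λ y ≤ x}` (in `[0,∞]`, with the Loewner order). -/
def infRatio {m : Type*} [Fintype m] (x y : Matrix m m ℂ) : ENNReal :=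
  sSup {r : ENNReal | ∃ c : ℝ, 0 ≤ c ∧ r = ENNReal.ofReal c ∧ (x - c • y).PosSemidef}

/-- The Hilbert projective metric `d_H(x,y) = log (sup(x/y) / inf(x/y)) ∈ [0,∞]`. -/
def dH {m : Type*} [Fintype m] (x y : Matrix m m ℂ) : EReal :=
  ENNReal.log (supRatio x y / infRatio x y)

/-- The projective diameter `Δ(T) = sup { d_H(T x, T y) : x, y PSD nonzero }`. -/
def DeltaT {m : Type*} [Fintype m] (T : Matrix m m ℂ →ₗ[ℂ] Matrix m m ℂ) : EReal :=
  sSup {e : EReal | ∃ x y : Matrix m m ℂ,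
    x.PosSemidef ∧ x ≠ 0 ∧ y.PosSemidef ∧ y ≠ 0 ∧ e = dH (T x) (T y)}

end

section Helpers
variable {n : ℕ}
open Matrix
open scoped ComplexOrder


lemma real_smul_eq (r : ℝ) (A : Matrix (Fin n) (Fin n) ℂ) : r • A = (r : ℂ) • A := by
  ext i j; simp [Complex.real_smul]

lemma psd_smul {A : Matrix (Fin n) (Fin n) ℂ} (hA : A.PosSemidef) {c : ℝ} (hc : 0 ≤ c) :
    ((c : ℂ) • A).PosSemidef := by
  refine ⟨?_, fun x => ?_⟩
  · unfold Matrix.IsHermitian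
    rw [conjTranspose_smul, hA.1.eq, Complex.star_def, Complex.conj_ofReal]
  · exact (hA.smul (Complex.zero_le_real.mpr hc)).2 x

lemma psd_sum {s : Finset (Fin n)} {f : Fin n → Matrix (Fin n) (Fin n) ℂ}
    (h : ∀ i ∈ s, (f i).PosSemidef) : (∑ i ∈ s, f i).PosSemidef := by
  classical
  induction s using Finset.induction_on with
  | empty => simpa using Matrix.PosSemidef.zero
  | insert _ _ hx ih =>
    rw [Finset.sum_insert hx]
    exact (h _ (Finset.mem_insert_self _ _)).add (ih fun i hi => h _ (Finset.mem_insert_of_mem hi))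


lemma sandwich {A : Matrix (Fin n) (Fin n) ℂ} (hA : A.IsHermitian) {a b : ℝ}
    (ha : ∀ i, a ≤ hA.eigenvalues i) (hb : ∀ i, hA.eigenvalues i ≤ b) :
    (A - (a : ℂ) • 1).PosSemidef ∧ ((b : ℂ) • 1 - A).PosSemidef := by
  set U : Matrix (Fin n) (Fin n) ℂ := (hA.eigenvectorUnitary : Matrix (Fin n) (Fin n) ℂ) with hU
  set D : Matrix (Fin n) (Fin n) ℂ := diagonal (Complex.ofReal ∘ hA.eigenvalues) with hD
  have hUU : U * star U = 1 := (Matrix.mem_unitaryGroup_iff).mp hA.eigenvectorUnitary.2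
  have hsm : ∀ c : ℝ, U * ((c : ℂ) • 1) * star U = (c : ℂ) • 1 := by
    intro c
    rw [Matrix.mul_smul, Matrix.smul_mul, mul_one, hUU]
  have hspec : A = U * D * star U := hA.spectral_theorem
  constructor
  · have key : A - (a : ℂ) • 1 = U * (diagonal fun i => ((hA.eigenvalues i : ℂ) - a)) * star U := by
      have hdiag : (diagonal fun i : Fin n => ((hA.eigenvalues i : ℂ) - a)) = D - (a : ℂ) • 1 := by
        ext i j
        rcases eq_or_ne i j with h | h <;>
          simp [h, hD, Matrix.diagonal_apply, Matrix.one_apply]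
      rw [hdiag, Matrix.mul_sub, Matrix.sub_mul, hsm, ← hspec]
    rw [key, Matrix.star_eq_conjTranspose]
    refine Matrix.PosSemidef.mul_mul_conjTranspose_same ?_ U
    refine Matrix.posSemidef_diagonal_iff.mpr fun i => ?_
    rw [← Complex.ofReal_sub]
    exact Complex.zero_le_real.mpr (by linarith [ha i])
  · have key : (b : ℂ) • 1 - A = U * (diagonal fun i => ((b : ℂ) - hA.eigenvalues i)) * star U := by
      have hdiag : (diagonal fun i : Fin n => ((b : ℂ) - hA.eigenvalues i)) = (b : ℂ) • 1 - D := by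
        ext i j
        rcases eq_or_ne i j with h | h <;>
          simp [h, hD, Matrix.diagonal_apply, Matrix.one_apply]
      rw [hdiag, Matrix.mul_sub, Matrix.sub_mul, hsm, ← hspec]
    rw [key, Matrix.star_eq_conjTranspose]
    refine Matrix.PosSemidef.mul_mul_conjTranspose_same ?_ U
    refine Matrix.posSemidef_diagonal_iff.mpr fun i => ?_
    rw [← Complex.ofReal_sub]
    exact Complex.zero_le_real.mpr (by linarith [hb i])

lemma rank_one_decomp {A : Matrix (Fin n) (Fin n) ℂ} (hA : A.IsHermitian) :
    A = ∑ i, (hA.eigenvalues i : ℂ) •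
      Matrix.vecMulVec (⇑(hA.eigenvectorBasis i)) (star ⇑(hA.eigenvectorBasis i)) := by
  conv_lhs => rw [hA.spectral_theorem, Unitary.conjStarAlgAut_apply]
  ext j k
  rw [Matrix.mul_apply, Matrix.sum_apply]
  refine Finset.sum_congr rfl fun i _ => ?_
  simp only [Matrix.mul_diagonal, Matrix.star_apply, Matrix.smul_apply,
    Matrix.vecMulVec_apply, Pi.star_apply, Function.comp_apply,
    Matrix.IsHermitian.eigenvectorUnitary_apply, smul_eq_mul, RCLike.star_def]
  rw [mul_right_comm]
  exact mul_comm _ _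


lemma unit_col {A : Matrix (Fin n) (Fin n) ℂ} (hA : A.IsHermitian) (i : Fin n) :
    ∑ j, ‖(hA.eigenvectorBasis i : EuclideanSpace ℂ (Fin n)) j‖ ^ 2 = 1 := by
  have hnorm : ‖hA.eigenvectorBasis i‖ = 1 := hA.eigenvectorBasis.orthonormal.1 i
  have := EuclideanSpace.norm_eq (hA.eigenvectorBasis i)
  rw [hnorm] at this
  have h2 : ∑ j, ‖(hA.eigenvectorBasis i : EuclideanSpace ℂ (Fin n)) j‖ ^ 2 = 1 := by
    have h3 := congrArg (· ^ 2) this.symm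
    simpa [Real.sq_sqrt (Finset.sum_nonneg fun j _ => sq_nonneg _)] using h3
  simpa using h2

lemma key_bound (T : Matrix (Fin n) (Fin n) ℂ →ₗ[ℂ] Matrix (Fin n) (Fin n) ℂ)
    (C : ℝ)
    (hprim : ∀ ψ : Fin n → ℂ, (∑ i, ‖ψ i‖ ^ 2 = 1) →
      ∃ hpd : (T (Matrix.vecMulVec ψ (star ψ))).PosDef,
        (⨆ i, hpd.1.eigenvalues i) ≤ C * ⨅ i, hpd.1.eigenvalues i)
    (x : Matrix (Fin n) (Fin n) ℂ) (hx : x.PosSemidef) (hx0 : x ≠ 0) :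
    ∃ a : ℝ, 0 < a ∧ (T x - (a : ℂ) • 1).PosSemidef ∧
      (((C * a : ℝ) : ℂ) • 1 - T x).PosSemidef := by
  haveI hne : Nonempty (Fin n) := by
    by_contra h
    exact hx0 (by ext i j; exact (h ⟨i⟩).elim)
  set lam := hx.1.eigenvalues with hlam
  set psi : Fin n → (Fin n → ℂ) := fun i => ⇑(hx.1.eigenvectorBasis i) with hpsi
  have H : ∀ i, ∃ hpd : (T (Matrix.vecMulVec (psi i) (star (psi i)))).PosDef,
      (⨆ j, hpd.1.eigenvalues j) ≤ C * ⨅ j, hpd.1.eigenvalues j :=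
    fun i => hprim (psi i) (unit_col hx.1 i)
  choose hpd hbd using H
  set B : Fin n → Matrix (Fin n) (Fin n) ℂ :=
    fun i => T (Matrix.vecMulVec (psi i) (star (psi i))) with hB
  set m : Fin n → ℝ := fun i => ⨅ j, (hpd i).1.eigenvalues j with hm
  have hmpos : ∀ i, 0 < m i := by
    intro i
    obtain ⟨j0, hj0⟩ := Finite.exists_min ((hpd i).1.eigenvalues)
    exact lt_of_lt_of_le ((hpd i).eigenvalues_pos j0) (le_ciInf hj0)
  have hsand : ∀ i, (B i - (m i : ℂ) • 1).PosSemidef ∧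
      (((C * m i : ℝ) : ℂ) • 1 - B i).PosSemidef := by
    intro i
    refine sandwich (hpd i).1 (fun j => ciInf_le (Finite.bddBelow_range _) j) (fun j => ?_)
    exact le_trans (le_ciSup (Finite.bddAbove_range _) j) (hbd i)
  have hlamnn : ∀ i, 0 ≤ lam i := fun i => hx.eigenvalues_nonneg i
  have hdecomp : x = ∑ i, (lam i : ℂ) • Matrix.vecMulVec (psi i) (star (psi i)) :=
    rank_one_decomp hx.1
  have hTx : T x = ∑ i, (lam i : ℂ) • B i := by
    conv_lhs => rw [hdecomp]
    rw [map_sum]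
    exact Finset.sum_congr rfl fun i _ => by rw [LinearMap.map_smul]
  set a : ℝ := ∑ i, lam i * m i with ha
  have hapos : 0 < a := by
    rcases (Finset.sum_nonneg fun i _ =>
        mul_nonneg (hlamnn i) (hmpos i).le).lt_or_eq with h | h
    · exact h
    · exfalso
      apply hx0
      have hz : ∀ i ∈ Finset.univ, lam i * m i = 0 :=
        (Finset.sum_eq_zero_iff_of_nonneg fun i _ =>
          mul_nonneg (hlamnn i) (hmpos i).le).mp h.symm
      have hlz : ∀ i, lam i = 0 := fun i => by
        have := hz i (Finset.mem_univ i)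
        rcases mul_eq_zero.mp this with h' | h'
        · exact h'
        · exact absurd h' (hmpos i).ne'
      rw [hdecomp]
      refine Finset.sum_eq_zero fun i _ => ?_
      rw [hlz i]
      simp
  refine ⟨a, hapos, ?_, ?_⟩
  · have heq : T x - (a : ℂ) • 1 = ∑ i, (lam i : ℂ) • (B i - (m i : ℂ) • 1) := by
      have h1 : ∀ i, (lam i : ℂ) • (B i - (m i : ℂ) • 1)
          = (lam i : ℂ) • B i - ((lam i * m i : ℝ) : ℂ) • 1 := by
        intro i
        rw [smul_sub, smul_smul]
        push_cast
        ring_nf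
      rw [Finset.sum_congr rfl fun i _ => h1 i, Finset.sum_sub_distrib, ← hTx,
        ← Finset.sum_smul]
      congr 2
      rw [ha]
      push_cast
      rfl
    rw [heq]
    exact psd_sum fun i _ => psd_smul (hsand i).1 (hlamnn i)
  · have heq : ((C * a : ℝ) : ℂ) • 1 - T x
        = ∑ i, (lam i : ℂ) • (((C * m i : ℝ) : ℂ) • 1 - B i) := by
      have h1 : ∀ i, (lam i : ℂ) • (((C * m i : ℝ) : ℂ) • 1 - B i)
          = ((lam i * (C * m i) : ℝ) : ℂ) • 1 - (lam i : ℂ) • B i := by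
        intro i
        rw [smul_sub, smul_smul]
        push_cast
        ring_nf
      rw [Finset.sum_congr rfl fun i _ => h1 i, Finset.sum_sub_distrib, ← hTx,
        ← Finset.sum_smul]
      congr 2
      push_cast
      rw [ha]
      push_cast
      rw [Finset.mul_sum]
      exact Finset.sum_congr rfl fun i _ => by ring
    rw [heq]
    exact psd_sum fun i _ => psd_smul (hsand i).2 (hlamnn i)

end Helpers

/-- If `T` is a positive linear map on `n × n` matrices and `C ≥ 1` is
such that for every unit vector `ψ` the matrix `T(ψψ*)` is positive definite with
`λ_max(T(ψψ*)) ≤ C λ_min(T(ψψ*))`, then `Δ(T) ≤ 2 log C`. -/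
theorem stmt8 (n : ℕ)
    (T : Matrix (Fin n) (Fin n) ℂ →ₗ[ℂ] Matrix (Fin n) (Fin n) ℂ) (hT : IsPosMap T)
    (C : ℝ) (hC : 1 ≤ C)
    (hprim : ∀ ψ : Fin n → ℂ, (∑ i, ‖ψ i‖ ^ 2 = 1) →
      ∃ hpd : (T (Matrix.vecMulVec ψ (star ψ))).PosDef,
        (⨆ i, hpd.1.eigenvalues i) ≤ C * ⨅ i, hpd.1.eigenvalues i) :
    DeltaT T ≤ ((2 * Real.log C : ℝ) : EReal) := by
  refine sSup_le ?_
  rintro e ⟨x, y, hx, hx0, hy, hy0, rfl⟩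
  obtain ⟨ax, hax, hx1, hx2⟩ := key_bound T C hprim x hx hx0
  obtain ⟨ay, hay, hy1, hy2⟩ := key_bound T C hprim y hy hy0
  have hC0 : 0 < C := lt_of_lt_of_le one_pos hC
  set p : ℝ := C * ax / ay with hp
  set q : ℝ := ax / (C * ay) with hq
  have hppos : 0 < p := by positivity
  have hqpos : 0 < q := by positivity
  have hsup : supRatio (T x) (T y) ≤ ENNReal.ofReal p := by
    apply sInf_le
    refine ⟨p, hppos.le, rfl, ?_⟩
    have hpay : p * ay = C * ax := by
      rw [hp]; field_simp
    have heq : p • T y - T x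
        = (p : ℂ) • (T y - (ay : ℂ) • 1) + (((C * ax : ℝ) : ℂ) • 1 - T x) := by
      rw [real_smul_eq, smul_sub, smul_smul, ← Complex.ofReal_mul, hpay]
      abel
    rw [heq]
    exact (psd_smul hy1 hppos.le).add hx2
  have hinf : ENNReal.ofReal q ≤ infRatio (T x) (T y) := by
    apply le_sSup
    refine ⟨q, hqpos.le, rfl, ?_⟩
    have hqay : q * (C * ay) = ax := by
      rw [hq]; field_simp
    have heq : T x - q • T y
        = (T x - (ax : ℂ) • 1) + (q : ℂ) • (((C * ay : ℝ) : ℂ) • 1 - T y) := by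
      rw [real_smul_eq, smul_sub, smul_smul, ← Complex.ofReal_mul, hqay]
      abel
    rw [heq]
    exact hx1.add (psd_smul hy2 hqpos.le)
  have hdiv : supRatio (T x) (T y) / infRatio (T x) (T y) ≤ ENNReal.ofReal (C ^ 2) :=
    calc supRatio (T x) (T y) / infRatio (T x) (T y)
        ≤ ENNReal.ofReal p / ENNReal.ofReal q := ENNReal.div_le_div hsup hinf
      _ = ENNReal.ofReal (p / q) := (ENNReal.ofReal_div_of_pos hqpos).symm
      _ = ENNReal.ofReal (C ^ 2) := by
          congr 1
          rw [hp, hq]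
          field_simp
  have hlog := ENNReal.log_monotone hdiv
  calc dH (T x) (T y)
      = (supRatio (T x) (T y) / infRatio (T x) (T y)).log := rfl
    _ ≤ (ENNReal.ofReal (C ^ 2)).log := hlog
    _ = ((2 * Real.log C : ℝ) : EReal) := by
        rw [ENNReal.log_ofReal_of_pos (by positivity), Real.log_pow]
        norm_num
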